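/- arXiv:2209.01687 — 6 statements merged into one kernel-verified Lean document; each statement's English description precedes it below -/
import Mathlib

section
/- Fix a model f : X → [0,1], a group g : X → {0,1} with μ(g) = Pr_{(x,y)∼D}[g(x)=1] > 0, and let Δ = E[y | g(x)=1] − E[f(x) | g(x)=1]. Define the patched model f'(x) = f(x) + Δ if g(x)=1 and f'(x) = f(x) otherwise. Then B(f) − B(f') = μ(g) · Δ². -/
open scoped Classical
open Finset

noncomputable section

/-- Brier score of a model `f` under a weighted distribution `D` on `X × {0,1}`. -/
def brier {X : Type*} [Fintype X] (D : X → Bool → ℝ) (f : X → ℝ) : ℝ :=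
  ∑ x, ∑ y, D x y * (f x - (if y then 1 else 0)) ^ 2

/-- Mass of a set `S ⊆ X` under the marginal of `D`. -/
def mass {X : Type*} [Fintype X] (D : X → Bool → ℝ) (S : Set X) : ℝ :=
  ∑ x, if x ∈ S then D x true + D x false else 0

/-- Conditional expectation of the label `y` given `x ∈ S`. -/
def condY {X : Type*} [Fintype X] (D : X → Bool → ℝ) (S : Set X) : ℝ :=
  (∑ x, if x ∈ S then D x true else 0) / mass D S

/-- Conditional expectation of `f x` given `x ∈ S`. -/
def condExp {X : Type*} [Fintype X] (D : X → Bool → ℝ) (f : X → ℝ) (S : Set X) : ℝ :=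
  (∑ x, if x ∈ S then (D x true + D x false) * f x else 0) / mass D S

/-- the patch operation reduces the Brier score by exactly `μ(g)·Δ²`. -/
theorem patch_improvement {X : Type*} [Fintype X] (D : X → Bool → ℝ)
    (hD : ∀ x y, 0 ≤ D x y) (hsum : ∑ x, (D x true + D x false) = 1)
    (f : X → ℝ) (g : X → Bool) (μ Δ : ℝ)
    (hμ : μ = mass D {x | g x = true}) (hμpos : 0 < μ)
    (hΔ : Δ = condY D {x | g x = true} - condExp D f {x | g x = true}) :
    brier D f - brier D (fun x => if g x then f x + Δ else f x) = μ * Δ ^ 2 := by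
  set S : Set X := {x | g x = true} with hS
  have hμne : μ ≠ 0 := ne_of_gt hμpos
  have hmass : mass D S = μ := hμ.symm
  have key : Δ * μ = (∑ x, if x ∈ S then D x true else 0)
      - (∑ x, if x ∈ S then (D x true + D x false) * f x else 0) := by
    rw [hΔ, condY, condExp, hmass]
    field_simp
    congr!
  have expand : brier D f - brier D (fun x => if g x then f x + Δ else f x)
      = ∑ x, ((if x ∈ S then 2 * Δ * D x true else 0)
            - (if x ∈ S then 2 * Δ * ((D x true + D x false) * f x) else 0)
            - (if x ∈ S then Δ ^ 2 * (D x true + D x false) else 0)) := by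
    unfold brier
    rw [← Finset.sum_sub_distrib]
    apply Finset.sum_congr rfl
    intro x _
    by_cases h : g x = true
    · simp [hS, h, Fintype.sum_bool]
      ring
    · simp [hS, h, Fintype.sum_bool]
  rw [expand]
  rw [Finset.sum_sub_distrib, Finset.sum_sub_distrib]
  have e1 : ∑ x, (if x ∈ S then 2 * Δ * D x true else 0)
      = 2 * Δ * ∑ x, if x ∈ S then D x true else 0 := by
    rw [Finset.mul_sum]
    apply Finset.sum_congr rfl
    intro x _; split <;> simp
  have e2 : ∑ x, (if x ∈ S then 2 * Δ * ((D x true + D x false) * f x) else 0)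
      = 2 * Δ * ∑ x, if x ∈ S then (D x true + D x false) * f x else 0 := by
    rw [Finset.mul_sum]
    apply Finset.sum_congr rfl
    intro x _; split <;> simp
  have e3 : ∑ x, (if x ∈ S then Δ ^ 2 * (D x true + D x false) else 0) = Δ ^ 2 * μ := by
    rw [← hmass, mass, Finset.mul_sum]
    apply Finset.sum_congr rfl
    intro x _; split <;> simp
  rw [e1, e2, e3]
  linear_combination (-2 * Δ) * key
end
end

section
/- Let f₁, f₂ : X → [0,1] and ε > 0. Let U> = {x : f₁(x) − f₂(x) > ε} and U< = {x : f₂(x) − f₁(x) > ε}, and suppose μ(U> ∪ U<) = α > 0 under the marginal of D on X. Then there exist a choice of bullet ∈ {>, <} and i ∈ {1,2} such that μ(U_bullet) · (E[y | x ∈ U_bullet] − E[f_i(x) | x ∈ U_bullet])² ≥ αε²/8. -/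
open scoped Classical
open Finset

noncomputable section

lemma mass_nonneg' {X : Type*} [Fintype X] (D : X → Bool → ℝ)
    (hD : ∀ x y, 0 ≤ D x y) (S : Set X) : 0 ≤ mass D S := by
  unfold mass
  apply Finset.sum_nonneg
  intro x _
  have := hD x true; have := hD x false
  by_cases h : x ∈ S <;> simp [h]; linarith

lemma key_lemma {X : Type*} [Fintype X] (D : X → Bool → ℝ)
    (hD : ∀ x y, 0 ≤ D x y) (f₁ f₂ : X → ℝ) (ε : ℝ) (hε : 0 < ε)
    (U : Set X) (hU : ∀ x ∈ U, f₁ x - f₂ x > ε) (hm : 0 < mass D U) :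
    ∃ f, (f = f₁ ∨ f = f₂) ∧
      mass D U * (condY D U - condExp D f U) ^ 2 ≥ mass D U * ε ^ 2 / 4 := by
  set m := mass D U with hmdef
  have hdiff : condExp D f₁ U - condExp D f₂ U ≥ ε := by
    have h1 : condExp D f₁ U - condExp D f₂ U
        = (∑ x, if x ∈ U then (D x true + D x false) * (f₁ x - f₂ x) else 0) / m := by
      unfold condExp
      rw [div_sub_div_same]
      congr 1
      rw [← Finset.sum_sub_distrib]
      apply Finset.sum_congr rfl
      intro x _
      by_cases h : x ∈ U <;> simp [h] <;> ring
    rw [h1, ge_iff_le, le_div_iff₀ hm]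
    have h2 : ε * m = ∑ x, if x ∈ U then (D x true + D x false) * ε else 0 := by
      rw [hmdef]; unfold mass
      rw [Finset.mul_sum]
      apply Finset.sum_congr rfl
      intro x _
      by_cases h : x ∈ U <;> simp [h]; ring
    rw [h2]
    apply Finset.sum_le_sum
    intro x _
    by_cases h : x ∈ U <;> simp [h]
    have := hU x h
    have hw : 0 ≤ D x true + D x false := by have := hD x true; have := hD x false; linarith
    nlinarith
  set c := condY D U
  set e₁ := condExp D f₁ U
  set e₂ := condExp D f₂ U
  rcases le_or_gt (ε / 2) (c - e₂) with h | h
  · refine ⟨f₂, Or.inr rfl, ?_⟩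
    have : (c - e₂) ^ 2 ≥ ε ^ 2 / 4 := by nlinarith
    nlinarith
  · refine ⟨f₁, Or.inl rfl, ?_⟩
    have h3 : e₁ - c > ε / 2 := by linarith
    have : (c - e₁) ^ 2 ≥ ε ^ 2 / 4 := by nlinarith
    nlinarith

/-- a large disagreement region witnesses a large group conditional
mean-consistency violation for one of the two models on one of the two pieces. -/
theorem disagreement_falsifies {X : Type*} [Fintype X] (D : X → Bool → ℝ)
    (hD : ∀ x y, 0 ≤ D x y) (hsum : ∑ x, (D x true + D x false) = 1)
    (f₁ f₂ : X → ℝ) (hf₁ : ∀ x, f₁ x ∈ Set.Icc (0 : ℝ) 1) (hf₂ : ∀ x, f₂ x ∈ Set.Icc (0 : ℝ) 1)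
    (ε α : ℝ) (hε : 0 < ε)
    (hα : α = mass D ({x | f₁ x - f₂ x > ε} ∪ {x | f₂ x - f₁ x > ε})) (hαpos : 0 < α) :
    ∃ U ∈ ({{x | f₁ x - f₂ x > ε}, {x | f₂ x - f₁ x > ε}} : Set (Set X)),
      ∃ f ∈ ({f₁, f₂} : Set (X → ℝ)),
        mass D U * (condY D U - condExp D f U) ^ 2 ≥ α * ε ^ 2 / 8 := by
  set U₁ : Set X := {x | f₁ x - f₂ x > ε} with hU₁
  set U₂ : Set X := {x | f₂ x - f₁ x > ε} with hU₂
  have hsplit : mass D (U₁ ∪ U₂) = mass D U₁ + mass D U₂ := by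
    unfold mass
    rw [← Finset.sum_add_distrib]
    apply Finset.sum_congr rfl
    intro x _
    by_cases h1 : x ∈ U₁
    · by_cases h2 : x ∈ U₂
      · exfalso
        have e1 : f₁ x - f₂ x > ε := h1
        have e2 : f₂ x - f₁ x > ε := h2
        linarith
      · simp [Set.mem_union, h1, h2]
    · by_cases h2 : x ∈ U₂ <;> simp [Set.mem_union, h1, h2]
  have hm1 : 0 ≤ mass D U₁ := mass_nonneg' D hD U₁
  have hm2 : 0 ≤ mass D U₂ := mass_nonneg' D hD U₂
  have hαeq : α = mass D U₁ + mass D U₂ := by rw [hα, hsplit]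
  rcases le_or_gt (α / 2) (mass D U₁) with hbig | hbig
  · have hmpos : 0 < mass D U₁ := by linarith
    obtain ⟨f, hf, hineq⟩ := key_lemma D hD f₁ f₂ ε hε U₁ (fun x hx => hx) hmpos
    refine ⟨U₁, Or.inl rfl, f, ?_, ?_⟩
    · rcases hf with h | h <;> simp [h]
    · have : mass D U₁ * ε ^ 2 / 4 ≥ α * ε ^ 2 / 8 := by nlinarith
      linarith
  · have hmpos : 0 < mass D U₂ := by linarith
    obtain ⟨f, hf, hineq⟩ := key_lemma D hD f₂ f₁ ε hε U₂ (fun x hx => hx) hmpos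
    refine ⟨U₂, Or.inr rfl, f, ?_, ?_⟩
    · rcases hf with h | h <;> simp [h]
    · have : mass D U₂ * ε ^ 2 / 4 ≥ α * ε ^ 2 / 8 := by nlinarith
      linarith
end
end

section
/- Fix α, ε > 0 and an integer m ≥ 2/(√α · ε). Suppose at some step a model f is patched on a group g of mass μ(g) using a rounded shift Δ = Round(Δ̃; m), where Δ̃ = E[y | g(x)=1] − E[f(x) | g(x)=1], and the unrounded patch would have reduced the Brier score by at least αε²/8 (i.e., μ(g)·Δ̃² ≥ αε²/8). Then the rounded patch reduces the Brier score by at least αε²/16: B(f) − B(f') ≥ αε²/8 − 1/(4m²) ≥ αε²/16, where f'(x) = f(x) + Δ for g(x)=1 and f'(x) = f(x) otherwise. -/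
open scoped Classical
open Finset

noncomputable section

/-- patching with a rounded shift still reduces the Brier score by `αε²/16`,
provided the grid is fine enough (`m ≥ 2/(√α·ε)`). -/
theorem rounded_patch_improvement {X : Type*} [Fintype X] (D : X → Bool → ℝ)
    (hD : ∀ x y, 0 ≤ D x y) (hsum : ∑ x, (D x true + D x false) = 1)
    (f : X → ℝ) (g : X → Bool) (α ε : ℝ) (hα : 0 < α) (hε : 0 < ε)
    (m : ℕ) (hm : (m : ℝ) ≥ 2 / (Real.sqrt α * ε))
    (hμpos : 0 < mass D {x | g x = true})
    (Δtil Δ : ℝ)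
    (hΔtil : Δtil = condY D {x | g x = true} - condExp D f {x | g x = true})
    (hround : |Δtil - Δ| ≤ 1 / (2 * (m : ℝ)))
    (hbig : mass D {x | g x = true} * Δtil ^ 2 ≥ α * ε ^ 2 / 8) :
    brier D f - brier D (fun x => if g x then f x + Δ else f x) ≥ α * ε ^ 2 / 8 - 1 / (4 * (m : ℝ) ^ 2) ∧
      α * ε ^ 2 / 8 - 1 / (4 * (m : ℝ) ^ 2) ≥ α * ε ^ 2 / 16 := by
  set S : Set X := {x | g x = true} with hS
  set μ := mass D S with hμ
  set A := ∑ x, if x ∈ S then D x true else 0 with hA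
  set T := ∑ x, if x ∈ S then (D x true + D x false) * f x else 0 with hT
  have hμne : μ ≠ 0 := ne_of_gt hμpos
  have hμT : A - T = μ * Δtil := by
    have hmne : mass D S ≠ 0 := hμne
    have hcond : mass D S * (condY D S - condExp D f S)
        = (∑ x, if x ∈ S then D x true else 0)
          - (∑ x, if x ∈ S then (D x true + D x false) * f x else 0) := by
      unfold condY condExp
      field_simp
      congr 1 <;>
      · apply Finset.sum_congr rfl
        intro x _
        by_cases h : x ∈ S <;> simp [h] <;> ring
    rw [hΔtil, hμ, hA, hT, hcond]
  
  have hkey : brier D f - brier D (fun x => if g x then f x + Δ else f x)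
      = 2 * Δ * (A - T) - Δ ^ 2 * μ := by
    rw [hA, hT, hμ]
    unfold brier mass
    rw [mul_sub, Finset.mul_sum, Finset.mul_sum, Finset.mul_sum,
      ← Finset.sum_sub_distrib, ← Finset.sum_sub_distrib, ← Finset.sum_sub_distrib]
    apply Finset.sum_congr rfl
    intro x _
    simp only [Fintype.sum_bool, hS, Set.mem_setOf_eq]
    by_cases hx : g x = true <;> simp [hx] <;> ring
  have hdiff : brier D f - brier D (fun x => if g x then f x + Δ else f x)
      = μ * Δtil ^ 2 - μ * (Δtil - Δ) ^ 2 := by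
    rw [hkey, hμT]; ring
  have hμ1 : μ ≤ 1 := by
    rw [hμ]; unfold mass
    rw [← hsum]
    apply Finset.sum_le_sum
    intro x _
    split
    · exact le_rfl
    · have := hD x true; have := hD x false; linarith
  have hm0 : (0:ℝ) < m := by
    have h1 : (0:ℝ) < 2 / (Real.sqrt α * ε) := by positivity
    linarith
  have hsq : (Δtil - Δ) ^ 2 ≤ 1 / (4 * (m:ℝ)^2) := by
    have hnn := abs_nonneg (Δtil - Δ)
    have h2 : (Δtil - Δ)^2 = |Δtil - Δ|^2 := (sq_abs _).symm
    rw [h2]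
    calc |Δtil - Δ|^2 ≤ (1 / (2*(m:ℝ)))^2 := pow_le_pow_left₀ hnn hround 2
      _ = 1 / (4 * (m:ℝ)^2) := by field_simp; ring
  have herr : μ * (Δtil - Δ)^2 ≤ 1 / (4 * (m:ℝ)^2) := by
    calc μ * (Δtil - Δ)^2 ≤ 1 * (1 / (4 * (m:ℝ)^2)) := by
          apply mul_le_mul hμ1 hsq (by positivity) one_pos.le
      _ = 1 / (4 * (m:ℝ)^2) := one_mul _
  constructor
  · rw [hdiff]
    linarith [hbig]
  · have hsa : 0 < Real.sqrt α := Real.sqrt_pos.mpr hα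
    have hsa2 : Real.sqrt α ^ 2 = α := Real.sq_sqrt hα.le
    have h2 : (m:ℝ) * (Real.sqrt α * ε) ≥ 2 := by
      rw [ge_iff_le, div_le_iff₀ (by positivity)] at hm
      linarith
    have hexp : ((m:ℝ)*(Real.sqrt α*ε))^2 = (m:ℝ)^2*(α*ε^2) := by
      rw [mul_pow, mul_pow, hsa2]
    have h3 : (m:ℝ)^2 * (α * ε^2) ≥ 4 := by
      nlinarith [h2, hexp]
    have h4 : 1 / (4*(m:ℝ)^2) ≤ α*ε^2/16 := by
      rw [div_le_div_iff₀ (by positivity) (by norm_num)]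
      nlinarith
    linarith
end
end

section
/- Fix a model f, a group g with μ(g) > 0, Δ̃ = E[y | g(x)=1] − E[f(x) | g(x)=1], and any real constant c. Let f_c(x) = f(x) + c for g(x)=1 and f_c(x) = f(x) otherwise. Then B(f) − B(f_c) = μ(g)·(2cΔ̃ − c²), and this is maximized over c at c = Δ̃, giving maximum decrease μ(g)·Δ̃². -/
open scoped Classical
open Finset

noncomputable section

theorem key {X : Type*} [Fintype X] (D : X → Bool → ℝ)
    (f : X → ℝ) (g : X → Bool) (hμpos : 0 < mass D {x | g x = true})
    (Δtil : ℝ) (hΔtil : Δtil = condY D {x | g x = true} - condExp D f {x | g x = true})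
    (c : ℝ) :
    brier D f - brier D (fun x => if g x then f x + c else f x) =
        mass D {x | g x = true} * (2 * c * Δtil - c ^ 2) := by
  have hM : mass D {x | g x = true} ≠ 0 := ne_of_gt hμpos
  set T : ℝ := ∑ x, if g x = true then D x true else 0 with hT
  set A : ℝ := ∑ x, if g x = true then (D x true + D x false) * f x else 0 with hA
  have hmass : mass D {x | g x = true} = ∑ x, if g x = true then D x true + D x false else 0 := by
    rw [mass]
    refine Finset.sum_congr rfl fun x _ => ?_
    by_cases h : g x = true <;> simp [h]
  have hΔ : Δtil * mass D {x | g x = true} = T - A := by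
    rw [hΔtil, condY, condExp]
    field_simp
    refine congrArg₂ (· - ·) ?_ ?_ <;>
      · refine Finset.sum_congr rfl fun x _ => ?_
        by_cases h : g x = true <;> simp [h]
  rw [brier, brier, ← Finset.sum_sub_distrib]
  have hterm : ∀ x : X,
      (∑ y, D x y * (f x - (if y then 1 else 0)) ^ 2) -
        (∑ y, D x y * ((if g x then f x + c else f x) - (if y then 1 else 0)) ^ 2) =
      (if g x = true then
        (-2*c) * ((D x true + D x false) * f x) + (2*c) * (D x true)
          - c^2 * (D x true + D x false) else 0) := by
    intro x
    by_cases h : g x = true <;> simp [h, Fintype.sum_bool] <;> ring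
  rw [Finset.sum_congr rfl fun x _ => hterm x]
  have expand : ∀ x : X,
      (if g x = true then
        (-2*c) * ((D x true + D x false) * f x) + (2*c) * (D x true)
          - c^2 * (D x true + D x false) else 0) =
      (-2*c) * (if g x = true then (D x true + D x false) * f x else 0)
        + (2*c) * (if g x = true then D x true else 0)
        - c^2 * (if g x = true then D x true + D x false else 0) := by
    intro x; by_cases h : g x = true <;> simp [h]
  rw [Finset.sum_congr rfl fun x _ => expand x]
  rw [Finset.sum_sub_distrib, Finset.sum_add_distrib, ← Finset.mul_sum, ← Finset.mul_sum,
    ← Finset.mul_sum, ← hT, ← hA, ← hmass]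
  linear_combination (-2) * c * hΔ


/-- shifting by a constant `c` on the group `g` changes the Brier score by
`μ(g)(2cΔ̃ − c²)`, which is maximized at `c = Δ̃` with decrease `μ(g)Δ̃²`. -/
theorem constant_patch_identity {X : Type*} [Fintype X] (D : X → Bool → ℝ)
    (hD : ∀ x y, 0 ≤ D x y) (hsum : ∑ x, (D x true + D x false) = 1)
    (f : X → ℝ) (g : X → Bool) (hμpos : 0 < mass D {x | g x = true})
    (Δtil : ℝ) (hΔtil : Δtil = condY D {x | g x = true} - condExp D f {x | g x = true})
    (c : ℝ) :
    brier D f - brier D (fun x => if g x then f x + c else f x) =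
        mass D {x | g x = true} * (2 * c * Δtil - c ^ 2) ∧
      brier D f - brier D (fun x => if g x then f x + c else f x) ≤
        mass D {x | g x = true} * Δtil ^ 2 ∧
      brier D f - brier D (fun x => if g x then f x + Δtil else f x) =
        mass D {x | g x = true} * Δtil ^ 2 := by
  have h1 := key D f g hμpos Δtil hΔtil c
  have h2 := key D f g hμpos Δtil hΔtil Δtil
  refine ⟨h1, ?_, by rw [h2]; ring⟩
  rw [h1]
  nlinarith [sq_nonneg (Δtil - c), hμpos.le]
end
end

section
/- Let D be a distribution on X × {0,1}, f : X → ℝ a model, and g : X → {0,1} a group with η = E_{(x,y)∼D}[g(x)·(y − f(x))] and μ = E[g(x)] > 0. Then the Brier-score improvement from the optimal constant patch on g equals η²/μ: setting f'(x) = f(x) + η/μ for g(x)=1 and f'(x) = f(x) otherwise gives B(f) − B(f') = η²/μ ≥ η² (the last inequality since μ ≤ 1). -/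
open scoped Classical
open Finset

noncomputable section

/-- the optimal constant patch on a group `g` improves the Brier score by
exactly `η²/μ ≥ η²`, where `η = E[g(x)(y − f(x))]` and `μ = E[g(x)]`. -/
theorem eta_patch_improvement {X : Type*} [Fintype X] (D : X → Bool → ℝ)
    (hD : ∀ x y, 0 ≤ D x y) (hsum : ∑ x, (D x true + D x false) = 1)
    (f : X → ℝ) (g : X → Bool) (η μ : ℝ)
    (hη : η = ∑ x, if g x then D x true - (D x true + D x false) * f x else 0)
    (hμ : μ = mass D {x | g x = true}) (hμpos : 0 < μ) :
    brier D f - brier D (fun x => if g x then f x + η / μ else f x) = η ^ 2 / μ ∧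
      η ^ 2 / μ ≥ η ^ 2 := by
  have hμ' : μ = ∑ x, if g x then D x true + D x false else 0 := by
    rw [hμ]; unfold mass
    exact Finset.sum_congr rfl fun x _ => by by_cases h : g x <;> simp [h]
  have hμne : μ ≠ 0 := ne_of_gt hμpos
  have key : brier D f - brier D (fun x => if g x then f x + η / μ else f x)
      = 2 * (η / μ) * η - (η / μ) ^ 2 * μ := by
    unfold brier
    rw [← Finset.sum_sub_distrib, hη, hμ', Finset.mul_sum, Finset.mul_sum,
      ← Finset.sum_sub_distrib]
    apply Finset.sum_congr rfl
    intro x _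
    by_cases h : g x <;> simp [h, Fintype.sum_bool] <;> ring
  constructor
  · rw [key]; field_simp; ring
  · have hμle : μ ≤ 1 := by
      rw [hμ', ← hsum]
      apply Finset.sum_le_sum
      intro x _
      have h1 := hD x true; have h2 := hD x false
      by_cases h : g x <;> simp [h] <;> linarith
    rw [ge_iff_le, le_div_iff₀ hμpos]
    calc η ^ 2 * μ ≤ η ^ 2 * 1 := mul_le_mul_of_nonneg_left hμle (sq_nonneg η)
    _ = η ^ 2 := by ring
end
end

section
/- Let f₁, f₂ : X → [0,1], ε > 0, and suppose μ(U_ε^•(f₁,f₂)) ≥ α/2 for some • ∈ {>,<}, where U_ε^>(f₁,f₂) = {x : f₁(x) − f₂(x) > ε}. Then for at least one i ∈ {1,2}, |μ(U_ε^•) · E[y − f_i(x) | x ∈ U_ε^•]| ≥ αε/4, and moreover μ(U_ε^•)·E[y − f_i(x) | x ∈ U_ε^•]² ≥ αε²/8. -/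
open scoped Classical
open Finset

noncomputable section

/-- a disagreement piece of mass at least `α/2` witnesses both a large
contestation statistic `|μ(U)·E[y − fᵢ(x) | x ∈ U]| ≥ αε/4` and a large mean-consistency
violation `μ(U)·E[y − fᵢ(x) | x ∈ U]² ≥ αε²/8` for one of the two models. -/
theorem disagreement_contestation {X : Type*} [Fintype X] (D : X → Bool → ℝ)
    (hD : ∀ x y, 0 ≤ D x y) (hsum : ∑ x, (D x true + D x false) = 1)
    (f₁ f₂ : X → ℝ) (hf₁ : ∀ x, f₁ x ∈ Set.Icc (0 : ℝ) 1) (hf₂ : ∀ x, f₂ x ∈ Set.Icc (0 : ℝ) 1)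
    (ε α : ℝ) (hε : 0 < ε) (hα : 0 < α) (U : Set X)
    (hU : U = {x | f₁ x - f₂ x > ε} ∨ U = {x | f₂ x - f₁ x > ε})
    (hmass : mass D U ≥ α / 2) :
    ∃ f ∈ ({f₁, f₂} : Set (X → ℝ)),
      α * ε / 4 ≤ |mass D U * (condY D U - condExp D f U)| ∧
        α * ε ^ 2 / 8 ≤ mass D U * (condY D U - condExp D f U) ^ 2 := by

  have hm0 : 0 < mass D U := lt_of_lt_of_le (by positivity) hmass
  have key : ∀ g h : X → ℝ, (∀ x ∈ U, ε < g x - h x) →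
      ε ≤ condExp D g U - condExp D h U := by
    intro g h hgh
    have hnum : ε * mass D U ≤ (∑ x, (if x ∈ U then (D x true + D x false) * g x else 0))
        - ∑ x, (if x ∈ U then (D x true + D x false) * h x else 0) := by
      rw [← Finset.sum_sub_distrib]
      have h1 : ε * mass D U = ∑ x, (if x ∈ U then (D x true + D x false) * ε else 0) := by
        rw [mass, Finset.mul_sum]
        refine Finset.sum_congr rfl fun x _ => ?_
        split <;> ring
      rw [h1]
      refine Finset.sum_le_sum fun x _ => ?_
      by_cases hx : x ∈ U
      · simp only [hx, if_true]
        have hw : 0 ≤ D x true + D x false := add_nonneg (hD x true) (hD x false)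
        have := hgh x hx
        nlinarith
      · simp [hx]
    rw [condExp, condExp, div_sub_div_same, le_div_iff₀ hm0]
    linarith
  set a := condY D U - condExp D f₁ U with ha
  set b := condY D U - condExp D f₂ U with hb
  have hdiff : ε ≤ |a - b| := by
    rcases hU with hU | hU
    · have := key f₁ f₂ (by intro x hx; rw [hU] at hx; exact hx)
      calc ε ≤ condExp D f₁ U - condExp D f₂ U := this
        _ = b - a := by ring
        _ ≤ |a - b| := by rw [abs_sub_comm]; exact le_abs_self _
    · have := key f₂ f₁ (by intro x hx; rw [hU] at hx; exact hx)
      calc ε ≤ condExp D f₂ U - condExp D f₁ U := this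
        _ = a - b := by ring
        _ ≤ |a - b| := le_abs_self _
  have final : ∀ c : ℝ, ε / 2 ≤ |c| →
      α * ε / 4 ≤ |mass D U * c| ∧ α * ε ^ 2 / 8 ≤ mass D U * c ^ 2 := by
    intro c hc
    have h1 : |mass D U * c| = mass D U * |c| := by rw [abs_mul, abs_of_pos hm0]
    constructor
    · rw [h1]; nlinarith
    · have h2 : (ε / 2) ^ 2 ≤ c ^ 2 := by nlinarith [sq_abs c, abs_nonneg c]
      nlinarith
  by_cases hca : ε / 2 ≤ |a|
  · exact ⟨f₁, Set.mem_insert _ _, final a hca⟩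
  · have hcb : ε / 2 ≤ |b| := by
      have h3 : |a - b| ≤ |a| + |b| := abs_sub a b
      push_neg at hca
      linarith
    exact ⟨f₂, Set.mem_insert_of_mem _ rfl, final b hcb⟩
end
end
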